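/- Assume mu_l ≤ mu_h and F(y_0) > 0. Then 1 < 1/eta_1 < y_0, T(1/eta_1) = 0, and T*(1/eta_1) ≠ 0. -/

import Mathlib

/-- Facts about the number `eta = (B + sqrt (B^2+4C))/(2A)`: it lies in `(0,1)`
provided `A, C > 0` and `A^2 - A*B - C > 0`, and its inverse is a root of
`C y^2 + A*B*y - A^2`. -/
theorem quad_root_facts (A B C eta : ℝ) (hA : 0 < A) (hC : 0 < C)
    (hE : 0 < A^2 - A*B - C)
    (heta : eta = (B + Real.sqrt (B^2 + 4*C)) / (2*A)) :
    0 < eta ∧ eta < 1 ∧ C*(1/eta)^2 + A*B*(1/eta) - A^2 = 0 := by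
  have hd0 : (0:ℝ) ≤ B^2 + 4*C := by nlinarith [sq_nonneg B]
  have hsd2 : Real.sqrt (B^2 + 4*C) ^ 2 = B^2 + 4*C := Real.sq_sqrt hd0
  have hsd0 : 0 ≤ Real.sqrt (B^2 + 4*C) := Real.sqrt_nonneg _
  have hBsd : 0 < B + Real.sqrt (B^2 + 4*C) := by nlinarith [hsd2, hsd0, hC]
  have heta0 : 0 < eta := by rw [heta]; exact div_pos hBsd (by linarith)
  have hAne : (2*A) ≠ 0 := by positivity
  have h2Ae : 2*A*eta - B = Real.sqrt (B^2 + 4*C) := by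
    rw [heta]; field_simp; ring
  have hsq : (2*A*eta - B)^2 = B^2 + 4*C := by rw [h2Ae, hsd2]
  have hquad : A^2*eta^2 - A*B*eta - C = 0 := by linear_combination hsq / 4
  have hid : eta*(A^2 - A*B - C) = (1-eta)*(A^2*eta + C) := by
    linear_combination hquad
  have heta1 : eta < 1 := by
    by_contra hcon
    push_neg at hcon
    have h1 : 0 < A^2*eta + C := by nlinarith
    have h2 : 0 ≤ (eta - 1)*(A^2*eta + C) :=
      mul_nonneg (by linarith) (le_of_lt h1)
    nlinarith [mul_pos hE heta0]
  refine ⟨heta0, heta1, ?_⟩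
  have hene : eta ≠ 0 := ne_of_gt heta0
  field_simp
  linear_combination (-1) * hquad

set_option maxHeartbeats 2000000 in
/-- Key Lemma case. -/
theorem key_lemma_pos
    (p q mh ml : ℝ)
    (hp : p ∈ Set.Ioo (0:ℝ) 1) (hq : q ∈ Set.Ioo (0:ℝ) 1)
    (hmh : mh ∈ Set.Ioo (0:ℝ) 1) (hml : ml ∈ Set.Ioo (0:ℝ) 1)
    (hpar : p + q + mh + ml = 1)
    (hrho : p / mh + q / ml < 1)
    (hmu : ml ≤ mh)
    (Delta F T Tstar : ℝ → ℝ)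
    (hDelta : ∀ y, Delta y = (p*mh - (1-p)*(1-mh))^2*(q*y + 1 - q)^2
        - 2*(p*mh + (1-p)*(1-mh))*(q*y + 1 - q) + 1)
    (hF : ∀ y, F y = ((1-p) + mh - 2*(1-p)*ml)*q*y^2
        + (((1-p) + mh - 2*(1-p)*ml)*(1-q) + 2*(1-p)*q*ml - 1)*y
        + 2*(1-p)*(1-q)*ml)
    (hT : ∀ y, T y = F y - y * Real.sqrt (Delta y))
    (hTstar : ∀ y, Tstar y = F y + y * Real.sqrt (Delta y))
    (y0 : ℝ)
    (hy0 : y0 = (p*mh + (1-p)*(1-mh) - 2*Real.sqrt (p*mh*(1-p)*(1-mh)))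
        / ((p*mh - (1-p)*(1-mh))^2 * q) - (1-q)/q)
    (eta1 : ℝ)
    (heta1 : eta1 = ((1 - mh*(1-q) - (1-p)*(1-q)*(1-ml) - (1-p)*q*ml)
        + Real.sqrt ((1 - mh*(1-q) - (1-p)*(1-q)*(1-ml) - (1-p)*q*ml)^2
            + 4*(1-p)*(1-q)*(mh - (1-p)*ml)*(1-ml)*q))
        / (2*(1-p)*(1-q)*ml))
    (hFy0 : 0 < F y0) :
    1 < 1/eta1 ∧ 1/eta1 < y0 ∧ T (1/eta1) = 0 ∧ Tstar (1/eta1) ≠ 0 := by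
  obtain ⟨hp0, hp1⟩ := hp
  obtain ⟨hq0, hq1⟩ := hq
  obtain ⟨hmh0, hmh1⟩ := hmh
  obtain ⟨hml0, hml1⟩ := hml
  have h1p : 0 < 1 - p := by linarith
  have h1q : 0 < 1 - q := by linarith
  have h1mh : 0 < 1 - mh := by linarith
  have h1ml : 0 < 1 - ml := by linarith
  -- rho inequality in polynomial form
  have hrho' : p * ml + q * mh < mh * ml := by
    have h := mul_lt_mul_of_pos_left hrho (mul_pos hmh0 hml0)
    have he : (mh*ml)*(p/mh + q/ml) = p*ml + q*mh := by
      field_simp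
    rw [he] at h; linarith
  have hpmh : p < mh := by
    have h1 : 0 < q / ml := by positivity
    have h2 : p / mh < 1 := by linarith
    rwa [div_lt_one hmh0] at h2
  -- abbreviations
  obtain ⟨A, hA⟩ : ∃ x : ℝ, x = (1-p)*(1-q)*ml := ⟨_, rfl⟩
  obtain ⟨B, hB⟩ : ∃ x : ℝ, x = 1 - mh*(1-q) - (1-p)*(1-q)*(1-ml) - (1-p)*q*ml :=
    ⟨_, rfl⟩
  obtain ⟨C, hC⟩ : ∃ x : ℝ, x = (1-p)*(1-q)*(mh - (1-p)*ml)*(1-ml)*q := ⟨_, rfl⟩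
  have hA0 : 0 < A := by rw [hA]; positivity
  have hmhml : 0 < mh - (1-p)*ml := by
    have e : mh - (1-p)*ml = (mh - ml) + p*ml := by ring
    have hpml := mul_pos hp0 hml0
    linarith
  have hC0 : 0 < C := by rw [hC]; positivity
  have hE0 : 0 < A^2 - A*B - C := by
    have hEq : A^2 - A*B - C = (1-p)*(1-q)*(mh*ml - p*ml - q*mh) := by
      rw [hA, hB, hC]; ring
    rw [hEq]
    have h : 0 < mh*ml - p*ml - q*mh := by linarith
    positivity
  have heta : eta1 = (B + Real.sqrt (B^2 + 4*C)) / (2*A) := by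
    rw [heta1, hA, hB, hC]
    rw [show (1 - mh*(1-q) - (1-p)*(1-q)*(1-ml) - (1-p)*q*ml)^2
        + 4*(1-p)*(1-q)*(mh - (1-p)*ml)*(1-ml)*q
        = (1 - mh*(1-q) - (1-p)*(1-q)*(1-ml) - (1-p)*q*ml)^2
        + 4*((1-p)*(1-q)*(mh - (1-p)*ml)*(1-ml)*q) from by ring]
    rw [show 2*(1-p)*(1-q)*ml = 2*((1-p)*(1-q)*ml) from by ring]
  obtain ⟨heta0, hetalt1, hQYe⟩ := quad_root_facts A B C eta1 hA0 hC0 hE0 heta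
  obtain ⟨Y, hYdef⟩ : ∃ x : ℝ, x = 1/eta1 := ⟨_, rfl⟩
  have hQY : C*Y^2 + A*B*Y - A^2 = 0 := by rw [hYdef]; exact hQYe
  have hY1 : 1 < Y := by
    rw [hYdef, lt_div_iff₀ heta0]; linarith
  -- square roots sa, sb
  obtain ⟨sa, hsadef⟩ : ∃ x : ℝ, x = Real.sqrt (p*mh) := ⟨_, rfl⟩
  obtain ⟨sb, hsbdef⟩ : ∃ x : ℝ, x = Real.sqrt ((1-p)*(1-mh)) := ⟨_, rfl⟩
  have hsa2 : sa^2 = p*mh := by rw [hsadef]; exact Real.sq_sqrt (by positivity)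
  have hsb2 : sb^2 = (1-p)*(1-mh) := by
    rw [hsbdef]; exact Real.sq_sqrt (by positivity)
  have hsa0 : 0 < sa := by rw [hsadef]; exact Real.sqrt_pos.mpr (by positivity)
  have hsb0 : 0 < sb := by rw [hsbdef]; exact Real.sqrt_pos.mpr (by positivity)
  have hdiff : sb^2 - sa^2 = q + ml := by
    linear_combination hsb2 - hsa2 - hpar
  have hsasb : sa < sb := by
    by_contra hcon
    push_neg at hcon
    have h1 : 0 ≤ (sa - sb)*(sa + sb) :=
      mul_nonneg (by linarith) (by linarith)
    have h2 : (sa - sb)*(sa + sb) = sa^2 - sb^2 := by ring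
    linarith
  have hprod : Real.sqrt (p*mh*(1-p)*(1-mh)) = sa*sb := by
    rw [show p*mh*(1-p)*(1-mh) = (p*mh)*((1-p)*(1-mh)) from by ring,
      Real.sqrt_mul (by positivity), hsadef, hsbdef]
  -- y0 in terms of sa, sb
  have hsub : p*mh + (1-p)*(1-mh) - 2*(sa*sb) = (sb-sa)^2 := by
    linear_combination -hsa2 - hsb2
  have hab2 : (p*mh - (1-p)*(1-mh))^2 = (sb-sa)^2*((sa+sb)^2) := by
    linear_combination ((1-p)*(1-mh) - p*mh + sb^2 - sa^2)*hsa2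
      - ((1-p)*(1-mh) - p*mh + sb^2 - sa^2)*hsb2
  have hbane : sb - sa ≠ 0 := by
    have h : 0 < sb - sa := by linarith
    exact ne_of_gt h
  have hsabne : sa + sb ≠ 0 := by positivity
  have hy0q : q*y0 + 1 - q = 1/(sa+sb)^2 := by
    rw [hy0, hprod, hsub, hab2]
    field_simp
    ring
  -- Delta factorization
  have hDe : ∀ y, Delta y
      = ((sa+sb)^2*(q*y+1-q) - 1)*((sb-sa)^2*(q*y+1-q) - 1) := by
    intro y
    rw [hDelta, ← hsa2, ← hsb2]; ring
  -- (sa+sb)^2 < 1 by strict AM-GM (using p < mh)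
  have hsum1 : (sa+sb)^2 < 1 := by
    have huv : (sa*sb)^2 = (p*(1-mh))*((1-p)*mh) := by
      rw [mul_pow, hsa2, hsb2]; ring
    have hw0 : 0 < sa*sb := mul_pos hsa0 hsb0
    have hppos : 0 < (p - mh)^2 := by
      have h : p - mh ≠ 0 := by linarith
      positivity
    have hamgm : 2*(sa*sb) < p*(1-mh) + (1-p)*mh := by
      by_contra hcon
      push_neg at hcon
      have hs : 0 ≤ p*(1-mh) + (1-p)*mh := by positivity
      have h1 : (p*(1-mh) + (1-p)*mh)*(p*(1-mh) + (1-p)*mh)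
          ≤ (2*(sa*sb))*(2*(sa*sb)) := mul_self_le_mul_self hs hcon
      have h2 : (p*(1-mh) + (1-p)*mh)*(p*(1-mh) + (1-p)*mh)
          - 4*((p*(1-mh))*((1-p)*mh)) = (p-mh)^2 := by ring
      have h3 : (2*(sa*sb))*(2*(sa*sb)) = 4*((sa*sb)^2) := by ring
      have h4 : 4*((sa*sb)^2) = 4*((p*(1-mh))*((1-p)*mh)) := by
        rw [huv]
      linarith
    have e1 : (sa+sb)^2 = sa^2 + sb^2 + 2*(sa*sb) := by ring
    have e2 : p*mh + (1-p)*(1-mh) + (p*(1-mh) + (1-p)*mh) = 1 := by ring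
    linarith [hsa2, hsb2]
  have hsum0 : 0 < (sa+sb)^2 := by positivity
  have hy01 : 1 < y0 := by
    have h : (1:ℝ) < 1/(sa+sb)^2 := by
      rw [lt_div_iff₀ hsum0]; linarith
    by_contra hcon
    push_neg at hcon
    have h2 : q*y0 ≤ q*1 := mul_le_mul_of_nonneg_left hcon (le_of_lt hq0)
    linarith [hy0q, h]
  -- Delta y0 = 0
  have hs0id : (sa+sb)^2*(q*y0+1-q) = 1 := by
    rw [hy0q]; field_simp
  have hDy0 : Delta y0 = 0 := by
    rw [hDe y0, show (sa+sb)^2*(q*y0+1-q) - 1 = 0 from by linarith [hs0id],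
      zero_mul]
  -- key algebraic identity
  have hkey : ∀ y, (1-q)*((F y)^2 - y^2*(Delta y))
      = 4*(y-1)*(q*y+1-q)*(C*y^2 + A*B*y - A^2) := by
    intro y
    rw [hF, hDelta, hA, hB, hC]
    ring
  -- Q(y0) > 0
  have hQy0 : 0 < C*y0^2 + A*B*y0 - A^2 := by
    have hk2 : (1-q)*(F y0)^2
        = 4*(y0-1)*(q*y0+1-q)*(C*y0^2 + A*B*y0 - A^2) := by
      linear_combination (hkey y0) + (1-q)*y0^2*hDy0
    by_contra hcon
    push_neg at hcon
    have hs0 : 0 < q*y0 + 1 - q := by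
      have := mul_le_mul_of_nonneg_left (le_of_lt hy01) (le_of_lt hq0)
      linarith
    have hP1 : 0 < (y0-1)*(q*y0+1-q) := mul_pos (by linarith) hs0
    have h1 : 0 < (1-q)*(F y0)^2 := mul_pos h1q (pow_pos hFy0 2)
    have h3 : ((y0-1)*(q*y0+1-q))*(C*y0^2 + A*B*y0 - A^2) ≤ 0 :=
      mul_nonpos_iff.mpr (Or.inl ⟨le_of_lt hP1, hcon⟩)
    have e : 4*(y0-1)*(q*y0+1-q)*(C*y0^2 + A*B*y0 - A^2)
        = 4*(((y0-1)*(q*y0+1-q))*(C*y0^2 + A*B*y0 - A^2)) := by ring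
    rw [e] at hk2
    linarith [hk2, h1, h3]
  -- positivity of the slope factor at Y
  have hslope : 0 < C*(Y+1) + A*B := by
    have h : (Y-1)*(C*(Y+1)+A*B) = A^2 - A*B - C := by
      linear_combination hQY
    by_contra hcon
    push_neg at hcon
    have h2 : (Y-1)*(C*(Y+1)+A*B) ≤ 0 :=
      mul_nonpos_iff.mpr (Or.inl ⟨by linarith, hcon⟩)
    linarith
  -- Y < y0
  have hYy0 : Y < y0 := by
    by_contra hcon
    push_neg at hcon
    have h : (y0 - Y)*(C*(y0+Y) + A*B)
        = (C*y0^2 + A*B*y0 - A^2) - (C*Y^2 + A*B*Y - A^2) := by ring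
    have e : C*(y0+Y) + A*B = (C*(Y+1) + A*B) + C*(y0-1) := by ring
    have hc3 : 0 < C*(y0-1) := mul_pos hC0 (by linarith)
    have h2 : 0 < C*(y0+Y) + A*B := by linarith
    have h3 : (y0 - Y)*(C*(y0+Y) + A*B) ≤ 0 :=
      mul_nonpos_iff.mpr (Or.inr ⟨by linarith, le_of_lt h2⟩)
    linarith [h, hQY, hQy0]
  -- Delta is positive strictly left of y0
  have hDpos : ∀ r, 1 < r → r < y0 → 0 < Delta r := by
    intro r hr1 hry0
    rw [hDe r]
    have hsr1 : 1 ≤ q*r + 1 - q := by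
      have := mul_le_mul_of_nonneg_left (le_of_lt hr1) (le_of_lt hq0)
      linarith
    have hsrlt : q*r + 1 - q < q*y0 + 1 - q := by
      have := mul_lt_mul_of_pos_left hry0 hq0
      linarith
    have h1 : (sa+sb)^2*(q*r+1-q) - 1 < 0 := by
      have h2 := mul_lt_mul_of_pos_left hsrlt hsum0
      linarith [hs0id]
    have hlt : (sb-sa)^2 < (sa+sb)^2 := by
      have e : (sa+sb)^2 - (sb-sa)^2 = 4*(sa*sb) := by ring
      have := mul_pos hsa0 hsb0
      linarith
    have h2 : (sb-sa)^2*(q*r+1-q) - 1 < 0 := by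
      have h3 := mul_lt_mul_of_pos_right hlt
        (show (0:ℝ) < q*r+1-q from by linarith)
      linarith
    exact mul_pos_of_neg_of_neg h1 h2
  have hDY : 0 < Delta Y := hDpos Y hY1 hYy0
  -- F(Y)^2 = Y^2 * Delta Y
  have hGY : (F Y)^2 = Y^2 * Delta Y := by
    have h0 : (1-q)*((F Y)^2 - Y^2*Delta Y) = 0 := by
      linear_combination (hkey Y) + 4*(Y-1)*(q*Y+1-q)*hQY
    rcases mul_eq_zero.mp h0 with h | h
    · linarith
    · linarith
  -- F Y > 0 via IVT
  have hFc : Continuous F := by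
    have h : F = fun y => ((1-p) + mh - 2*(1-p)*ml)*q*y^2
        + (((1-p) + mh - 2*(1-p)*ml)*(1-q) + 2*(1-p)*q*ml - 1)*y
        + 2*(1-p)*(1-q)*ml := funext hF
    rw [h]; continuity
  have hFY : 0 < F Y := by
    by_contra hcon
    push_neg at hcon
    obtain ⟨r, hrmem, hFr⟩ := intermediate_value_Icc (le_of_lt hYy0)
      hFc.continuousOn (Set.mem_Icc.mpr ⟨hcon, le_of_lt hFy0⟩)
    obtain ⟨hrY, hry0⟩ := hrmem
    have hrne : r ≠ y0 := by
      intro h; rw [h] at hFr; rw [hFr] at hFy0; exact lt_irrefl 0 hFy0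
    have hry0' : r < y0 := lt_of_le_of_ne hry0 hrne
    have hr1 : 1 < r := lt_of_lt_of_le hY1 hrY
    have hDr : 0 < Delta r := hDpos r hr1 hry0'
    have hQr : 0 ≤ C*r^2 + A*B*r - A^2 := by
      have h : (r - Y)*(C*(r+Y) + A*B)
          = (C*r^2 + A*B*r - A^2) - (C*Y^2 + A*B*Y - A^2) := by ring
      have e : C*(r+Y) + A*B = (C*(Y+1) + A*B) + C*(r-1) := by ring
      have hc3 : 0 < C*(r-1) := mul_pos hC0 (by linarith)
      have h2 : 0 < C*(r+Y) + A*B := by linarith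
      have h4 : 0 ≤ (r - Y)*(C*(r+Y) + A*B) :=
        mul_nonneg (by linarith) (le_of_lt h2)
      linarith [h, hQY]
    have hk2 : -((1-q)*(r^2*Delta r))
        = 4*((r-1)*((q*r+1-q)*(C*r^2 + A*B*r - A^2))) := by
      have hk := hkey r
      rw [hFr] at hk
      linear_combination hk
    have hsr : 0 < q*r + 1 - q := by
      have := mul_le_mul_of_nonneg_left (le_of_lt hr1) (le_of_lt hq0)
      linarith
    have hrhs : 0 ≤ 4*((r-1)*((q*r+1-q)*(C*r^2 + A*B*r - A^2))) := by
      have h4 : 0 ≤ (r-1)*((q*r+1-q)*(C*r^2 + A*B*r - A^2)) :=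
        mul_nonneg (by linarith)
          (mul_nonneg (le_of_lt hsr) hQr)
      linarith
    have hlhs : 0 < (1-q)*(r^2*Delta r) :=
      mul_pos h1q (mul_pos (pow_pos (by linarith) 2) hDr)
    linarith [hk2, hrhs, hlhs]
  -- sqrt(Delta Y) = F Y / Y
  have hY0 : 0 < Y := by linarith
  have hYne : Y ≠ 0 := ne_of_gt hY0
  have hsqrtD : Real.sqrt (Delta Y) = F Y / Y := by
    rw [show Delta Y = (F Y / Y)^2 from by
      field_simp
      linear_combination -hGY]
    exact Real.sqrt_sq (le_of_lt (div_pos hFY hY0))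
  have goalY : 1 < Y ∧ Y < y0 ∧ T Y = 0 ∧ Tstar Y ≠ 0 := by
    refine ⟨hY1, hYy0, ?_, ?_⟩
    · rw [hT, hsqrtD]
      field_simp
      ring
    · have h : Tstar Y = 2*(F Y) := by
        rw [hTstar, hsqrtD]
        field_simp
        ring
      rw [h]
      have : 0 < 2*(F Y) := by linarith
      exact ne_of_gt this
  rw [hYdef] at goalY
  exact goalY
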